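/- Let ρ be a convex risk measure on X. For every Ψ ∈ X and every γ > 0 one has γ·ρ(Ψ/γ) − γ·ρ(0) ≤ sup_{ω∈Ω}(−Ψ(ω)), so that the conservative risk measure ρ_{0⁺}(Ψ) = sup_{γ>0} (γ·ρ(Ψ/γ) − γ·ρ(0)) is real-valued (it is the non-decreasing limit of γ·ρ(Ψ/γ) − γ·ρ(0) as γ ↓ 0). Moreover ρ_{0⁺} is a coherent risk measure: it is convex, monotone, cash translation invariant, and positively homogeneous (ρ_{0⁺}(λΨ) = λ·ρ_{0⁺}(Ψ) for all λ ≥ 0). -/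

import Mathlib

open BoundedContinuousFunction

/-- A (monetary) convex risk measure on the space `Ω →ᵇ ℝ` of bounded functions on `Ω`. -/
def IsConvexRiskMeasure {Ω : Type*} [TopologicalSpace Ω] (ρ : (Ω →ᵇ ℝ) → ℝ) : Prop :=
  (∀ (Φ Ψ : Ω →ᵇ ℝ) (l : ℝ), 0 ≤ l → l ≤ 1 →
      ρ (l • Φ + (1 - l) • Ψ) ≤ l * ρ Φ + (1 - l) * ρ Ψ) ∧
  (∀ Φ Ψ : Ω →ᵇ ℝ, (∀ ω, Φ ω ≤ Ψ ω) → ρ Ψ ≤ ρ Φ) ∧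
  (∀ (Φ : Ω →ᵇ ℝ) (m : ℝ), ρ (Φ + BoundedContinuousFunction.const Ω m) = ρ Φ - m)

/-- The conservative risk measure `ρ_{0⁺}(Ψ) = sup_{γ > 0} (γ ρ(Ψ/γ) - γ ρ(0))`. -/
noncomputable def conservativeRM {Ω : Type*} [TopologicalSpace Ω]
    (ρ : (Ω →ᵇ ℝ) → ℝ) (Ψ : Ω →ᵇ ℝ) : ℝ :=
  ⨆ γ : {g : ℝ // 0 < g}, ((γ : ℝ) * ρ (((γ : ℝ))⁻¹ • Ψ) - (γ : ℝ) * ρ 0)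

section Aux

instance : Nonempty {g : ℝ // (0:ℝ) < g} := ⟨⟨1, one_pos⟩⟩

variable {Ω : Type*} [TopologicalSpace Ω] [Nonempty Ω] {ρ : (Ω →ᵇ ℝ) → ℝ}

omit [Nonempty Ω] in
lemma rho_const (hρ : IsConvexRiskMeasure ρ) (c : ℝ) :
    ρ (BoundedContinuousFunction.const Ω c) = ρ 0 - c := by
  have := hρ.2.2 0 c
  simpa using this

lemma key_bound (hρ : IsConvexRiskMeasure ρ) (Ψ : Ω →ᵇ ℝ) {γ : ℝ} (hγ : 0 < γ) :
    γ * ρ (γ⁻¹ • Ψ) - γ * ρ 0 ≤ ⨆ ω, -Ψ ω := by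
  set M := ⨆ ω, -Ψ ω with hM
  have hbdd : BddAbove (Set.range fun ω => -Ψ ω) := by
    exact (isBounded_range (-Ψ)).bddAbove
  have hMω : ∀ ω, -M ≤ Ψ ω := fun ω => by
    have := le_ciSup hbdd ω; (try simp only at this); linarith
  have h1 : ρ (γ⁻¹ • Ψ) ≤ ρ 0 + γ⁻¹ * M := by
    have hmono := hρ.2.1 (BoundedContinuousFunction.const Ω (-(γ⁻¹ * M))) (γ⁻¹ • Ψ)
      (fun ω => by
        have h2 : γ⁻¹ * (-M) ≤ γ⁻¹ * Ψ ω :=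
          mul_le_mul_of_nonneg_left (by linarith [hMω ω]) (by positivity)
        simp only [BoundedContinuousFunction.const_apply,
          BoundedContinuousFunction.coe_smul, Pi.smul_apply, smul_eq_mul]
        linarith)
    rw [rho_const hρ] at hmono
    linarith
  have h2 := mul_le_mul_of_nonneg_left h1 hγ.le
  rw [mul_add, ← mul_assoc, mul_inv_cancel₀ hγ.ne', one_mul] at h2
  linarith

lemma rmBdd (hρ : IsConvexRiskMeasure ρ) (Ψ : Ω →ᵇ ℝ) :
    BddAbove (Set.range fun γ : {g : ℝ // 0 < g} =>
      ((γ : ℝ) * ρ (((γ : ℝ))⁻¹ • Ψ) - (γ : ℝ) * ρ 0)) :=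
  ⟨⨆ ω, -Ψ ω, by rintro x ⟨γ, rfl⟩; exact key_bound hρ Ψ γ.2⟩

end Aux

/-- For every `Ψ` and `γ > 0`, `γ ρ(Ψ/γ) - γ ρ(0) ≤ sup_ω (-Ψ(ω))`, so the conservative
risk measure `ρ_{0⁺}` is real-valued; moreover `ρ_{0⁺}` is a coherent risk measure:
convex, monotone, cash translation invariant and positively homogeneous. -/
theorem stmt3 {Ω : Type*} [TopologicalSpace Ω] [DiscreteTopology Ω] [Nonempty Ω]
    (ρ : (Ω →ᵇ ℝ) → ℝ) (hρ : IsConvexRiskMeasure ρ) :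
    (∀ (Ψ : Ω →ᵇ ℝ) (γ : ℝ), 0 < γ →
        γ * ρ (γ⁻¹ • Ψ) - γ * ρ 0 ≤ ⨆ ω, -Ψ ω) ∧
    IsConvexRiskMeasure (conservativeRM ρ) ∧
    (∀ (Ψ : Ω →ᵇ ℝ) (l : ℝ), 0 ≤ l →
        conservativeRM ρ (l • Ψ) = l * conservativeRM ρ Ψ) := by
  refine ⟨fun Ψ γ hγ => key_bound hρ Ψ hγ, ⟨?_, ?_, ?_⟩, ?_⟩
  · -- convexity
    intro Φ Ψ l hl0 hl1
    unfold conservativeRM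
    apply ciSup_le
    intro γ
    have hsmul : (γ : ℝ)⁻¹ • (l • Φ + (1 - l) • Ψ)
        = l • ((γ : ℝ)⁻¹ • Φ) + (1 - l) • ((γ : ℝ)⁻¹ • Ψ) := by
      rw [smul_add, smul_comm, smul_comm (γ : ℝ)⁻¹]
    have hc := hρ.1 ((γ : ℝ)⁻¹ • Φ) ((γ : ℝ)⁻¹ • Ψ) l hl0 hl1
    rw [hsmul]
    have h1 := le_ciSup (rmBdd hρ Φ) γ
    have h2 := le_ciSup (rmBdd hρ Ψ) γ
    try simp only at h1 h2
    nlinarith [mul_le_mul_of_nonneg_left hc γ.2.le,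
      mul_le_mul_of_nonneg_left h1 hl0,
      mul_le_mul_of_nonneg_left h2 (sub_nonneg.mpr hl1)]
  · -- monotone
    intro Φ Ψ h
    unfold conservativeRM
    apply ciSup_le
    intro γ
    have hm : ρ ((γ : ℝ)⁻¹ • Ψ) ≤ ρ ((γ : ℝ)⁻¹ • Φ) := by
      refine hρ.2.1 _ _ fun ω => ?_
      simp only [BoundedContinuousFunction.coe_smul, Pi.smul_apply, smul_eq_mul]
      exact mul_le_mul_of_nonneg_left (h ω) (inv_nonneg.mpr γ.2.le)
    have h1 := le_ciSup (rmBdd hρ Φ) γ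
    try simp only at h1
    nlinarith [mul_le_mul_of_nonneg_left hm γ.2.le]
  · -- cash invariance
    intro Φ m
    have hterm : ∀ γ : {g : ℝ // 0 < g},
        (γ : ℝ) * ρ ((γ : ℝ)⁻¹ • (Φ + BoundedContinuousFunction.const Ω m)) - (γ : ℝ) * ρ 0
        = ((γ : ℝ) * ρ ((γ : ℝ)⁻¹ • Φ) - (γ : ℝ) * ρ 0) - m := by
      intro γ
      have e : (γ : ℝ)⁻¹ • (Φ + BoundedContinuousFunction.const Ω m)
          = (γ : ℝ)⁻¹ • Φ + BoundedContinuousFunction.const Ω ((γ : ℝ)⁻¹ * m) := by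
        ext ω
        simp [mul_add]
      rw [e, hρ.2.2]
      have h1 : (γ : ℝ) * ((γ : ℝ)⁻¹ * m) = m := by
        rw [← mul_assoc, mul_inv_cancel₀ γ.2.ne', one_mul]
      linear_combination -h1
    unfold conservativeRM
    simp_rw [hterm]
    have hb2 : BddAbove (Set.range fun γ : {g : ℝ // 0 < g} =>
        ((γ : ℝ) * ρ ((γ : ℝ)⁻¹ • Φ) - (γ : ℝ) * ρ 0) - m) := by
      refine ⟨(⨆ ω, -Φ ω) - m, ?_⟩
      rintro x ⟨γ, rfl⟩
      have := key_bound hρ Φ γ.2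
      simp only
      linarith
    apply le_antisymm
    · apply ciSup_le
      intro γ
      have := le_ciSup (rmBdd hρ Φ) γ
      try simp only at this ⊢
      linarith
    · have h3 : (⨆ γ : {g : ℝ // 0 < g},
          ((γ : ℝ) * ρ ((γ : ℝ)⁻¹ • Φ) - (γ : ℝ) * ρ 0))
          ≤ (⨆ γ : {g : ℝ // 0 < g},
            (((γ : ℝ) * ρ ((γ : ℝ)⁻¹ • Φ) - (γ : ℝ) * ρ 0) - m)) + m := by
        apply ciSup_le
        intro γ
        have := le_ciSup hb2 γ
        try simp only at this
        linarith
      linarith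
  · -- positive homogeneity
    intro Ψ l hl
    rcases hl.eq_or_lt with rfl | hl
    · rw [zero_smul, zero_mul]
      unfold conservativeRM
      have hz : ∀ γ : {g : ℝ // 0 < g},
          (γ : ℝ) * ρ ((γ : ℝ)⁻¹ • (0 : Ω →ᵇ ℝ)) - (γ : ℝ) * ρ 0 = 0 := by
        intro γ; rw [smul_zero]; ring
      simp_rw [hz]
      exact ciSup_const
    · unfold conservativeRM
      have key : ∀ γ : {g : ℝ // 0 < g},
          (γ : ℝ) * ρ ((γ : ℝ)⁻¹ • l • Ψ) - (γ : ℝ) * ρ 0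
          = l * (((γ : ℝ) / l) * ρ (((γ : ℝ) / l)⁻¹ • Ψ) - ((γ : ℝ) / l) * ρ 0) := by
        intro γ
        have e : (γ : ℝ)⁻¹ • l • Ψ = ((γ : ℝ) / l)⁻¹ • Ψ := by
          rw [smul_smul]
          congr 1
          field_simp
        have h1 : l * ((γ : ℝ) / l) = (γ : ℝ) := by field_simp
        rw [e]
        linear_combination (ρ 0 - ρ (((γ : ℝ) / l)⁻¹ • Ψ)) * h1
      simp_rw [key]
      rw [← Real.mul_iSup_of_nonneg hl.le]
      congr 1
      have hbL : BddAbove (Set.range fun γ : {g : ℝ // 0 < g} =>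
          ((γ : ℝ) / l) * ρ (((γ : ℝ) / l)⁻¹ • Ψ) - ((γ : ℝ) / l) * ρ 0) := by
        refine ⟨⨆ ω, -Ψ ω, ?_⟩
        rintro x ⟨γ, rfl⟩
        exact key_bound hρ Ψ (div_pos γ.2 hl)
      apply le_antisymm
      · exact ciSup_le fun γ => le_ciSup (rmBdd hρ Ψ) ⟨(γ : ℝ) / l, div_pos γ.2 hl⟩
      · refine ciSup_le fun γ => ?_
        have h := le_ciSup hbL ⟨l * (γ : ℝ), mul_pos hl γ.2⟩
        have e2 : (l * (γ : ℝ)) / l = (γ : ℝ) := by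
          field_simp
        simp only [e2] at h
        exact h
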